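/- Let φ be a one-variable first-order modal formula with counting quantifiers. Then φ is satisfiable with respect to QK (i.e., satisfiable in some constant domain first-order Kripke model) if and only if there exists a quasimodel for φ. -/

import Mathlib

/-! Syntax of one-variable first-order modal formulas with counting quantifiers:
    φ ::= P(x) | ¬φ | (φ∧φ) | ◇φ | ∃[≤c]x φ. -/

inductive Fml : Type
  | atom : ℕ → Fml
  | neg : Fml → Fml
  | conj : Fml → Fml → Fml
  | dia : Fml → Fml
  | countLe : ℕ → Fml → Fml
deriving DecidableEq

namespace Fml

/-- Subformulas. -/
def sub : Fml → Finset Fml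
  | atom n => {atom n}
  | neg ψ => insert (neg ψ) ψ.sub
  | conj ψ χ => insert (conj ψ χ) (ψ.sub ∪ χ.sub)
  | dia ψ => insert (dia ψ) ψ.sub
  | countLe c ψ => insert (countLe c ψ) ψ.sub

/-- Modal depth. -/
def md : Fml → ℕ
  | atom _ => 0
  | neg ψ => ψ.md
  | conj ψ χ => max ψ.md χ.md
  | dia ψ => ψ.md + 1
  | countLe _ ψ => ψ.md

/-- Capacity: the largest counting-quantifier subscript (0 if none). -/
def cpt : Fml → ℕ
  | atom _ => 0
  | neg ψ => ψ.cpt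
  | conj ψ χ => max ψ.cpt χ.cpt
  | dia ψ => ψ.cpt
  | countLe c ψ => max c ψ.cpt

/-- Length of the formula as a string, counting subscripts written in binary. -/
def len : Fml → ℕ
  | atom _ => 1
  | neg ψ => ψ.len + 1
  | conj ψ χ => ψ.len + χ.len + 1
  | dia ψ => ψ.len + 1
  | countLe c ψ => ψ.len + Nat.size c + 1

/-- Predicate symbols occurring in a formula. -/
def preds : Fml → Finset ℕ
  | atom n => {n}
  | neg ψ => ψ.preds
  | conj ψ χ => ψ.preds ∪ χ.preds
  | dia ψ => ψ.preds
  | countLe _ ψ => ψ.preds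

def imp (ψ χ : Fml) : Fml := neg (conj ψ (neg χ))
def or (ψ χ : Fml) : Fml := neg (conj (neg ψ) (neg χ))
def iff (ψ χ : Fml) : Fml := conj (ψ.imp χ) (χ.imp ψ)
def box (ψ : Fml) : Fml := neg (dia (neg ψ))
/-- `∃x ψ := ¬∃[≤0]x ψ`. -/
def ex (ψ : Fml) : Fml := neg (countLe 0 ψ)
/-- `∀x ψ := ∃[≤0]x ¬ψ`. -/
def fal (ψ : Fml) : Fml := countLe 0 (neg ψ)
/-- A tautology. -/
def top : Fml := neg (conj (atom 0) (neg (atom 0)))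

/-- `boxIter n ψ` is `□^n ψ`. -/
def boxIter : ℕ → Fml → Fml
  | 0, ψ => ψ
  | n+1, ψ => (boxIter n ψ).box

/-- `boxLe m ψ` is `⋀_{k=0}^{m} □^k ψ`. -/
def boxLe : ℕ → Fml → Fml
  | 0, ψ => ψ
  | n+1, ψ => conj (boxLe n ψ) (boxIter (n+1) ψ)

end Fml

/-- A first-order Kripke model `M = (W,R,D,d,I)` (unary predicates suffice for the
one-variable fragment). -/
structure KModel where
  W : Type
  R : W → W → Prop
  D : Type
  Dne : Nonempty D
  dom : W → Set D
  domNe : ∀ w, (dom w).Nonempty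
  I : W → ℕ → Set D
  Isub : ∀ w p, I w p ⊆ dom w

/-- Satisfaction `M,w ⊨^a φ`. -/
def KModel.sat (M : KModel) : Fml → M.W → M.D → Prop
  | .atom p, w, a => a ∈ M.I w p
  | .neg ψ, w, a => ¬ M.sat ψ w a
  | .conj ψ χ, w, a => M.sat ψ w a ∧ M.sat χ w a
  | .dia ψ, w, a => ∃ v, M.R w v ∧ M.sat ψ v a
  | .countLe c ψ, w, _ => {b | b ∈ M.dom w ∧ M.sat ψ w b}.encard ≤ (c : ℕ∞)

def KModel.constDom (M : KModel) : Prop := ∀ u v, M.dom u = M.dom v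
def KModel.expDom (M : KModel) : Prop := ∀ u v, M.R u v → M.dom u ⊆ M.dom v
def KModel.decDom (M : KModel) : Prop := ∀ u v, M.R u v → M.dom v ⊆ M.dom u

/-- Satisfiability with respect to QK (constant domains). -/
def satQK (φ : Fml) : Prop :=
  ∃ M : KModel, M.constDom ∧ ∃ w a, a ∈ M.dom w ∧ M.sat φ w a

/-- Satisfiability with respect to QK^exp (expanding domains). -/
def satQKexp (φ : Fml) : Prop :=
  ∃ M : KModel, M.expDom ∧ ∃ w a, a ∈ M.dom w ∧ M.sat φ w a

/-- Satisfiability with respect to QK^dec (decreasing domains). -/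
def satQKdec (φ : Fml) : Prop :=
  ∃ M : KModel, M.decDom ∧ ∃ w a, a ∈ M.dom w ∧ M.sat φ w a

/-- `R` is the immediate-successor (parent–child) relation of a rooted irreflexive
intransitive tree of depth ≤ m with root `r`. -/
def IsTreeOfDepth {W : Type} (R : W → W → Prop) (r : W) (m : ℕ) : Prop :=
  ∃ depth : W → ℕ,
    depth r = 0 ∧ (∀ w, depth w ≤ m) ∧
    (∀ u v, R u v → depth v = depth u + 1) ∧
    (∀ v, v ≠ r → ∃! u, R u v) ∧
    (∀ v, Relation.ReflTransGen R r v)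

/-- A type for φ: a Boolean-saturated subset of sub(φ). -/
def IsType (φ : Fml) (t : Finset Fml) : Prop :=
  t ⊆ φ.sub ∧
  (∀ ψ, Fml.neg ψ ∈ φ.sub → (Fml.neg ψ ∈ t ↔ ψ ∉ t)) ∧
  (∀ ψ χ, Fml.conj ψ χ ∈ φ.sub → (Fml.conj ψ χ ∈ t ↔ ψ ∈ t ∧ χ ∈ t))

/-- A quasistate for φ: a nonempty set of types with a multiplicity function
`μ : T → {1,…,cpt(φ)+1}` satisfying ∃[≤c]-saturation. -/
structure IsQuasistate (φ : Fml) (T : Finset (Finset Fml)) (μ : Finset Fml → ℕ) : Prop where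
  nonempty : T.Nonempty
  types : ∀ t ∈ T, IsType φ t
  mu_pos : ∀ t ∈ T, 1 ≤ μ t
  mu_le : ∀ t ∈ T, μ t ≤ φ.cpt + 1
  count : ∀ t ∈ T, ∀ c ξ, Fml.countLe c ξ ∈ φ.sub →
    (Fml.countLe c ξ ∈ t ↔ (T.filter (fun t' => ξ ∈ t')).sum μ ≤ c)

/-- `(W,≺,q,I,{r_i})` is a quasimodel for φ. -/
structure IsQuasimodel (φ : Fml) {W I : Type} (prec : W → W → Prop) (root : W)
    (T : W → Finset (Finset Fml)) (μ : W → Finset Fml → ℕ)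
    (r : I → W → Finset Fml) : Prop where
  tree : IsTreeOfDepth prec root φ.md
  qs : ∀ w, IsQuasistate φ (T w) (μ w)
  ine : Nonempty I
  run : ∀ i w, r i w ∈ T w
  witness : ∃ w t, t ∈ T w ∧ φ ∈ t
  coherence : ∀ i w v ξ, Fml.dia ξ ∈ φ.sub → prec w v → ξ ∈ r i v → Fml.dia ξ ∈ r i w
  saturation : ∀ i w ξ, Fml.dia ξ ∈ φ.sub → Fml.dia ξ ∈ r i w → ∃ v, prec w v ∧ ξ ∈ r i v
  mult : ∀ w t, t ∈ T w → (μ w t : ℕ∞) = min {i : I | r i w = t}.encard ((φ.cpt : ℕ∞) + 1)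

/-- Bundled quasimodels for φ. -/
structure Quasimodel (φ : Fml) where
  W : Type
  I : Type
  prec : W → W → Prop
  root : W
  T : W → Finset (Finset Fml)
  μ : W → Finset Fml → ℕ
  r : I → W → Finset Fml
  isQM : IsQuasimodel φ prec root T μ r


open Set in
lemma encard_biUnion_finset {α τ : Type*} (s : Finset τ) (S : τ → Set α)
    (hd : ∀ t ∈ s, ∀ t' ∈ s, t ≠ t' → Disjoint (S t) (S t')) :
    (⋃ t ∈ s, S t).encard = ∑ t ∈ s, (S t).encard := by
  classical
  induction s using Finset.induction with
  | empty => simp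
  | @insert a s ha ih =>
    rw [Finset.sum_insert ha]
    have h1 : (⋃ t ∈ insert a s, S t) = S a ∪ ⋃ t ∈ s, S t := by
      simp [Set.biUnion_insert]
    rw [h1, Set.encard_union_eq, ih]
    · intro t ht t' ht' h
      exact hd t (Finset.mem_insert_of_mem ht) t' (Finset.mem_insert_of_mem ht') h
    · rw [Set.disjoint_iUnion_right]
      intro t
      rw [Set.disjoint_iUnion_right]
      intro ht
      exact hd a (Finset.mem_insert_self a s) t (Finset.mem_insert_of_mem ht)
        (by rintro rfl; exact ha ht)

lemma capped_sum_le {τ : Type*} (s : Finset τ) (n : τ → ℕ∞) {c C : ℕ} (hc : c ≤ C) :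
    (∑ t ∈ s, min (n t) ((C : ℕ∞) + 1)) ≤ (c : ℕ∞) ↔ (∑ t ∈ s, n t) ≤ (c : ℕ∞) := by
  constructor
  · intro h
    have heq : ∀ t ∈ s, min (n t) ((C : ℕ∞) + 1) = n t := by
      intro t ht
      rcases le_or_gt (n t) ((C : ℕ∞) + 1) with h' | h'
      · exact min_eq_left h'
      · exfalso
        have h1 : ((C : ℕ∞) + 1) ≤ ∑ t ∈ s, min (n t) ((C : ℕ∞) + 1) := by
          calc ((C : ℕ∞) + 1) = min (n t) ((C : ℕ∞) + 1) := (min_eq_right h'.le).symm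
          _ ≤ _ := Finset.single_le_sum (f := fun t => min (n t) ((C : ℕ∞) + 1))
                (fun _ _ => zero_le) ht
        have h2 : ((C : ℕ∞) + 1) ≤ (c : ℕ∞) := h1.trans h
        have h3 : (c : ℕ∞) ≤ (C : ℕ∞) := by exact_mod_cast hc
        have h4 := h2.trans h3
        rw [← Nat.cast_one, ← Nat.cast_add, Nat.cast_le] at h4
        omega
    calc ∑ t ∈ s, n t = ∑ t ∈ s, min (n t) ((C : ℕ∞) + 1) :=
          (Finset.sum_congr rfl heq).symm
      _ ≤ _ := h
  · intro h
    exact le_trans (Finset.sum_le_sum (fun t _ => min_le_left _ _)) h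

lemma key_count {α β : Type*} [DecidableEq β] {C : ℕ} (Ω : Set α) (f : α → Finset β)
    (Ts : Finset (Finset β)) (μ : Finset β → ℕ)
    (hf : ∀ a ∈ Ω, f a ∈ Ts)
    (hμ : ∀ t ∈ Ts, (μ t : ℕ∞) = min ({a ∈ Ω | f a = t}.encard) ((C : ℕ∞) + 1))
    {c : ℕ} (hc : c ≤ C) (ξ : β) :
    ({a ∈ Ω | ξ ∈ f a}.encard ≤ (c : ℕ∞)) ↔ (Ts.filter (fun t => ξ ∈ t)).sum μ ≤ c := by
  classical
  have hset : {a ∈ Ω | ξ ∈ f a} =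
      ⋃ t ∈ Ts.filter (fun t => ξ ∈ t), {a ∈ Ω | f a = t} := by
    ext a
    simp only [Set.mem_setOf_eq, Set.mem_iUnion, Finset.mem_filter]
    constructor
    · rintro ⟨ha, hξ⟩
      exact ⟨f a, ⟨⟨hf a ha, hξ⟩, ha, rfl⟩⟩
    · rintro ⟨t, ⟨_, hξ⟩, ha, rfl⟩
      exact ⟨ha, hξ⟩
  rw [hset, encard_biUnion_finset _ _ (by
    intro t _ t' _ hne
    rw [Set.disjoint_left]
    rintro a ⟨_, rfl⟩ ⟨_, h⟩
    exact hne h)]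
  rw [← capped_sum_le _ _ hc]
  have h2 : ∑ t ∈ Ts.filter (fun t => ξ ∈ t), min ({a ∈ Ω | f a = t}.encard) ((C:ℕ∞)+1)
      = ∑ t ∈ Ts.filter (fun t => ξ ∈ t), (μ t : ℕ∞) := by
    refine Finset.sum_congr rfl (fun t ht => ?_)
    exact (hμ t (Finset.mem_filter.mp ht).1).symm
  rw [h2, ← Nat.cast_sum]
  exact_mod_cast Iff.rfl
namespace Fml

lemma mem_sub_self : ∀ φ : Fml, φ ∈ φ.sub := by
  intro φ; cases φ <;> simp [sub]

lemma sub_sub : ∀ φ ψ : Fml, ψ ∈ φ.sub → ψ.sub ⊆ φ.sub := by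
  intro φ
  induction φ with
  | atom n => intro ψ h; simp [sub] at h; subst h; simp [sub]
  | neg χ ih =>
    intro ψ h
    rw [sub, Finset.mem_insert] at h
    rcases h with rfl | h
    · exact Finset.Subset.refl _
    · exact (ih ψ h).trans (Finset.subset_insert _ _)
  | conj χ₁ χ₂ ih₁ ih₂ =>
    intro ψ h
    rw [sub, Finset.mem_insert, Finset.mem_union] at h
    rcases h with rfl | h | h
    · exact Finset.Subset.refl _
    · exact (ih₁ ψ h).trans ((Finset.subset_union_left).trans (Finset.subset_insert _ _))
    · exact (ih₂ ψ h).trans ((Finset.subset_union_right).trans (Finset.subset_insert _ _))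
  | dia χ ih =>
    intro ψ h
    rw [sub, Finset.mem_insert] at h
    rcases h with rfl | h
    · exact Finset.Subset.refl _
    · exact (ih ψ h).trans (Finset.subset_insert _ _)
  | countLe c χ ih =>
    intro ψ h
    rw [sub, Finset.mem_insert] at h
    rcases h with rfl | h
    · exact Finset.Subset.refl _
    · exact (ih ψ h).trans (Finset.subset_insert _ _)

lemma neg_mem_sub {φ ψ : Fml} (h : neg ψ ∈ φ.sub) : ψ ∈ φ.sub :=
  sub_sub φ _ h (by simp [sub, mem_sub_self])

lemma conj_mem_sub {φ ψ χ : Fml} (h : conj ψ χ ∈ φ.sub) : ψ ∈ φ.sub ∧ χ ∈ φ.sub :=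
  ⟨sub_sub φ _ h (by simp [sub, mem_sub_self]), sub_sub φ _ h (by simp [sub, mem_sub_self])⟩

lemma dia_mem_sub {φ ψ : Fml} (h : dia ψ ∈ φ.sub) : ψ ∈ φ.sub :=
  sub_sub φ _ h (by simp [sub, mem_sub_self])

lemma countLe_mem_sub {φ ψ : Fml} {c : ℕ} (h : countLe c ψ ∈ φ.sub) : ψ ∈ φ.sub :=
  sub_sub φ _ h (by simp [sub, mem_sub_self])

lemma cpt_le_of_mem_sub : ∀ φ ψ : Fml, ψ ∈ φ.sub → ψ.cpt ≤ φ.cpt := by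
  intro φ
  induction φ with
  | atom n => intro ψ h; simp [sub] at h; subst h; exact le_refl _
  | neg χ ih =>
    intro ψ h
    rw [sub, Finset.mem_insert] at h
    rcases h with rfl | h
    · exact le_refl _
    · exact ih ψ h
  | conj χ₁ χ₂ ih₁ ih₂ =>
    intro ψ h
    rw [sub, Finset.mem_insert, Finset.mem_union] at h
    rcases h with rfl | h | h
    · exact le_refl _
    · exact (ih₁ ψ h).trans (le_max_left _ _)
    · exact (ih₂ ψ h).trans (le_max_right _ _)
  | dia χ ih =>
    intro ψ h
    rw [sub, Finset.mem_insert] at h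
    rcases h with rfl | h
    · exact le_refl _
    · exact ih ψ h
  | countLe c χ ih =>
    intro ψ h
    rw [sub, Finset.mem_insert] at h
    rcases h with rfl | h
    · exact le_refl _
    · exact (ih ψ h).trans (le_max_right _ _)

lemma le_cpt_of_countLe_mem_sub {φ ψ : Fml} {c : ℕ} (h : countLe c ψ ∈ φ.sub) :
    c ≤ φ.cpt :=
  le_trans (le_max_left _ _) (cpt_le_of_mem_sub φ _ h)

end Fml
section Backward

variable {φ : Fml} (Q : Quasimodel φ)

/-- The Kripke model associated with a quasimodel. -/
noncomputable def Quasimodel.toModel : KModel where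
  W := Q.W
  R := Q.prec
  D := Q.I
  Dne := Q.isQM.ine
  dom := fun _ => Set.univ
  domNe := fun _ => @Set.univ_nonempty _ Q.isQM.ine
  I := fun w p => {i | Fml.atom p ∈ Q.r i w}
  Isub := fun _ _ => Set.subset_univ _

lemma Quasimodel.truth : ∀ ψ : Fml, ψ ∈ φ.sub → ∀ (w : Q.W) (i : Q.I),
    Q.toModel.sat ψ w i ↔ ψ ∈ Q.r i w := by
  intro ψ
  induction ψ with
  | atom n =>
    intro _ w i
    simp [KModel.sat, Quasimodel.toModel]
    exact Iff.rfl
  | neg χ ih =>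
    intro h w i
    have hχ := Fml.neg_mem_sub h
    have ht := ((Q.isQM.qs w).types _ (Q.isQM.run i w)).2.1 χ h
    simp only [KModel.sat]; rw [ih hχ w i, ht]
  | conj χ₁ χ₂ ih₁ ih₂ =>
    intro h w i
    obtain ⟨h1, h2⟩ := Fml.conj_mem_sub h
    have ht := ((Q.isQM.qs w).types _ (Q.isQM.run i w)).2.2 χ₁ χ₂ h
    simp only [KModel.sat]; rw [ih₁ h1 w i, ih₂ h2 w i, ht]
  | dia χ ih =>
    intro h w i
    have hχ := Fml.dia_mem_sub h
    simp only [KModel.sat]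
    constructor
    · rintro ⟨v, hv, hsat⟩
      exact Q.isQM.coherence i w v χ h hv ((ih hχ v i).mp hsat)
    · intro hd
      obtain ⟨v, hv, hm⟩ := Q.isQM.saturation i w χ h hd
      exact ⟨v, hv, (ih hχ v i).mpr hm⟩
  | countLe c χ ih =>
    intro h w i
    have hχ := Fml.countLe_mem_sub h
    have hc : c ≤ φ.cpt := Fml.le_cpt_of_countLe_mem_sub h
    have hcount := (Q.isQM.qs w).count _ (Q.isQM.run i w) c χ h
    simp only [KModel.sat]; rw [hcount]
    have hset : {b : Q.toModel.D | b ∈ Q.toModel.dom w ∧ Q.toModel.sat χ w b}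
        = {b ∈ (Set.univ : Set Q.toModel.D) | χ ∈ Q.r b w} := by
      ext b
      simp only [Set.mem_setOf_eq, Quasimodel.toModel, Set.mem_univ, true_and]
      exact and_congr_right (fun _ => ih hχ w b)
    rw [hset]
    exact key_count (C := φ.cpt) Set.univ (fun b => Q.r b w) (Q.T w) (Q.μ w)
      (fun b _ => Q.isQM.run b w)
      (by
        intro t ht
        rw [Q.isQM.mult w t ht]
        congr 1
        congr 1
        ext b
        simp)
      hc χ

lemma backward (h : Nonempty (Quasimodel φ)) : satQK φ := by
  obtain ⟨Q⟩ := h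
  obtain ⟨w, t, htT, hφt⟩ := Q.isQM.witness
  -- find a run realizing t at w
  have hμ : 1 ≤ Q.μ w t := (Q.isQM.qs w).mu_pos t htT
  have hm := Q.isQM.mult w t htT
  have hne : {i : Q.I | Q.r i w = t}.Nonempty := by
    rw [Set.nonempty_iff_ne_empty]
    intro hempty
    rw [hempty] at hm
    simp only [Set.encard_empty] at hm
    have h0 : (Q.μ w t : ℕ∞) = 0 := by simpa using hm
    have := Nat.cast_eq_zero.mp h0
    omega
  obtain ⟨i, hi⟩ := hne
  refine ⟨Q.toModel, fun _ _ => rfl, w, i, Set.mem_univ i, ?_⟩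
  have := (Q.truth φ (Fml.mem_sub_self φ) w i).mpr (by rw [hi]; exact hφt)
  exact this

end Backward
section Forward

/-- Paths in the unraveling of `M` from `w0`, of depth ≤ m, recorded in reverse
(current world first). -/
def PathOk (M : KModel) (w0 : M.W) (m : ℕ) (l : List M.W) : Prop :=
  l.Chain' (fun a b => M.R b a) ∧ l.getLast? = some w0 ∧ l.length ≤ m + 1

def PathW (M : KModel) (w0 : M.W) (m : ℕ) : Type := {l : List M.W // PathOk M w0 m l}

variable {M : KModel} {w0 : M.W} {m : ℕ}

lemma PathW.ne_nil (p : PathW M w0 m) : p.val ≠ [] := by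
  rintro h
  have := p.prop.2.1
  rw [h] at this
  simp at this

/-- The current (last-visited) world of a path. -/
def PathW.cur (p : PathW M w0 m) : M.W := p.val.head p.ne_nil

lemma PathW.head?_eq (p : PathW M w0 m) : p.val.head? = some p.cur :=
  List.head?_eq_head p.ne_nil

/-- The immediate-successor relation on paths. -/
def pprec (p q : PathW M w0 m) : Prop := ∃ v, q.val = v :: p.val

lemma pprec_len {p q : PathW M w0 m} (h : pprec p q) :
    q.val.length = p.val.length + 1 := by
  obtain ⟨v, hv⟩ := h
  rw [hv]; simp

lemma pprec_cur {p q : PathW M w0 m} (h : pprec p q) : M.R p.cur q.cur := by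
  obtain ⟨v, hv⟩ := h
  have hq : q.cur = v := by
    have := q.head?_eq
    rw [hv] at this
    simp at this
    exact this.symm
  have hchain := q.prop.1
  simp only [hv, List.Chain', List.isChain_cons] at hchain
  have := hchain.1 p.cur (by simp [p.head?_eq])
  rwa [hq]

lemma pprec_extend (p : PathW M w0 m) (hlen : p.val.length ≤ m) (v : M.W)
    (hR : M.R p.cur v) : ∃ q : PathW M w0 m, pprec p q ∧ q.cur = v := by
  have hok : PathOk M w0 m (v :: p.val) := by
    refine ⟨?_, ?_, ?_⟩
    · unfold List.Chain'; rw [List.isChain_cons]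
      refine ⟨?_, p.prop.1⟩
      intro y hy
      rw [p.head?_eq] at hy
      simp at hy
      subst hy
      exact hR
    · obtain ⟨a, t, ht⟩ := List.exists_cons_of_ne_nil p.ne_nil
      rw [ht, List.getLast?_cons_cons, ← ht]
      exact p.prop.2.1
    · simp; omega
  exact ⟨⟨v :: p.val, hok⟩, ⟨v, rfl⟩, rfl⟩

/-- The truncated unraveling of `M` from `w0` to depth `m`. -/
def trunc (M : KModel) (w0 : M.W) (m : ℕ) : KModel where
  W := PathW M w0 m
  R := pprec
  D := M.D
  Dne := M.Dne
  dom := fun p => M.dom p.cur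
  domNe := fun p => M.domNe _
  I := fun p n => M.I p.cur n
  Isub := fun p n => M.Isub _ n

/-- Truth preservation between the truncated unraveling and the original model. -/
lemma trunc_sat (ψ : Fml) : ∀ (p : PathW M w0 m) (a : M.D),
    p.val.length + ψ.md ≤ m + 1 → ((trunc M w0 m).sat ψ p a ↔ M.sat ψ p.cur a) := by
  induction ψ with
  | atom n =>
    intro p a _
    simp [KModel.sat, trunc]
    exact Iff.rfl
  | neg χ ih =>
    intro p a h
    simp only [KModel.sat]; rw [ih p a h]
  | conj χ₁ χ₂ ih₁ ih₂ =>
    intro p a h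
    rw [Fml.md] at h
    simp only [KModel.sat]; rw [ih₁ p a (by omega), ih₂ p a (by omega)]
  | dia χ ih =>
    intro p a h
    rw [Fml.md] at h
    simp only [KModel.sat]
    constructor
    · rintro ⟨q, hpq, hq⟩
      have hlen := pprec_len hpq
      exact ⟨q.cur, pprec_cur hpq, (ih q a (by omega)).mp hq⟩
    · rintro ⟨v, hv, hsat⟩
      obtain ⟨q, hpq, hcur⟩ := pprec_extend p (by omega) v hv
      have hlen := pprec_len hpq
      exact ⟨q, hpq, (ih q a (by omega)).mpr (by rw [hcur]; exact hsat)⟩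
  | countLe c χ ih =>
    intro p a h
    rw [Fml.md] at h
    simp only [KModel.sat]
    have hs : {b | b ∈ (trunc M w0 m).dom p ∧ (trunc M w0 m).sat χ p b}
        = {b | b ∈ M.dom p.cur ∧ M.sat χ p.cur b} := by
      ext b
      have := ih p b h
      simp only [Set.mem_setOf_eq, trunc]
      exact and_congr_right (fun _ => this)
    rw [hs]
    exact Iff.rfl

end Forward
section Forward2

variable {M : KModel} {w0 : M.W} {m : ℕ}

/-- The root path. -/
def rootP (M : KModel) (w0 : M.W) (m : ℕ) : PathW M w0 m :=
  ⟨[w0], List.isChain_singleton _, by simp, by simpa using Nat.succ_le_succ (Nat.zero_le m)⟩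

lemma rootP_cur : (rootP M w0 m).cur = w0 := rfl

lemma eq_rootP {v : PathW M w0 m} (h : v.val.length ≤ 1) : v = rootP M w0 m := by
  obtain ⟨a, rest, hv⟩ := List.exists_cons_of_ne_nil v.ne_nil
  have hrest : rest = [] := by
    rw [hv, List.length_cons] at h
    exact List.eq_nil_of_length_eq_zero (by omega)
  subst hrest
  have hlast := v.prop.2.1
  rw [hv] at hlast
  simp at hlast
  subst hlast
  exact Subtype.ext (by rw [hv]; rfl)

lemma parentP {v : PathW M w0 m} (h : 2 ≤ v.val.length) :
    ∃ u : PathW M w0 m, u.val = v.val.tail ∧ pprec u v := by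
  obtain ⟨a, rest, hv⟩ := List.exists_cons_of_ne_nil v.ne_nil
  have hrest : rest ≠ [] := by
    rw [hv] at h
    simp at h
    intro hr
    rw [hr] at h
    simp at h
  have hok : PathOk M w0 m rest := by
    refine ⟨?_, ?_, ?_⟩
    · have := v.prop.1
      rw [hv] at this
      exact this.tail
    · obtain ⟨b, t, hbt⟩ := List.exists_cons_of_ne_nil hrest
      have := v.prop.2.1
      rw [hv, hbt, List.getLast?_cons_cons] at this
      rw [hbt]
      exact this
    · have := v.prop.2.2
      rw [hv] at this
      simp at this
      omega
  exact ⟨⟨rest, hok⟩, by rw [hv]; rfl, ⟨a, by rw [hv]⟩⟩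

lemma isTreeP : IsTreeOfDepth (pprec (M := M) (w0 := w0) (m := m)) (rootP M w0 m) m := by
  refine ⟨fun p => p.val.length - 1, rfl, ?_, ?_, ?_, ?_⟩
  · intro p
    show p.val.length - 1 ≤ m
    have := p.prop.2.2
    omega
  · intro u v h
    show v.val.length - 1 = u.val.length - 1 + 1
    have h1 := pprec_len h
    have h2 := List.length_pos_iff.mpr u.ne_nil
    omega
  · intro v hv
    have hlen : 2 ≤ v.val.length := by
      have h1 := List.length_pos_iff.mpr v.ne_nil
      by_contra hc
      push_neg at hc
      exact hv (eq_rootP (by omega))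
    obtain ⟨u, hu, hpu⟩ := parentP hlen
    refine ⟨u, hpu, ?_⟩
    rintro u' ⟨v', hv'⟩
    apply Subtype.ext
    rw [hu, hv']
    rfl
  · intro v
    have key : ∀ n (v : PathW M w0 m), v.val.length ≤ n + 1 →
        Relation.ReflTransGen pprec (rootP M w0 m) v := by
      intro n
      induction n with
      | zero =>
        intro v h
        rw [eq_rootP h]
      | succ k ih =>
        intro v h
        by_cases hv : v.val.length ≤ 1
        · rw [eq_rootP hv]
        · push_neg at hv
          obtain ⟨u, hu, hpu⟩ := parentP (v := v) (by omega)
          have hlen : u.val.length ≤ k + 1 := by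
            rw [hu, List.length_tail]
            omega
          exact (ih u hlen).tail hpu
    exact key v.val.length v (by omega)

end Forward2

section Forward3

variable (φ : Fml) (M : KModel) (w0 : M.W)

open Classical in
/-- The type of `a` at path `p` in the truncated unraveling. -/
noncomputable def tpF (p : PathW M w0 φ.md) (a : M.D) : Finset Fml :=
  φ.sub.filter (fun ψ => (trunc M w0 φ.md).sat ψ p a)

lemma mem_tpF {p : PathW M w0 φ.md} {a : M.D} {ψ : Fml} :
    ψ ∈ tpF φ M w0 p a ↔ ψ ∈ φ.sub ∧ (trunc M w0 φ.md).sat ψ p a := by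
  classical
  simp [tpF]

lemma tpF_subset {p : PathW M w0 φ.md} {a : M.D} : tpF φ M w0 p a ⊆ φ.sub :=
  fun ψ h => ((mem_tpF φ M w0).mp h).1

open Classical in
/-- Realized types at a path. -/
noncomputable def TF (p : PathW M w0 φ.md) : Finset (Finset Fml) :=
  φ.sub.powerset.filter (fun t => ∃ a ∈ M.dom p.cur, tpF φ M w0 p a = t)

lemma mem_TF {p : PathW M w0 φ.md} {t : Finset Fml} :
    t ∈ TF φ M w0 p ↔ ∃ a ∈ M.dom p.cur, tpF φ M w0 p a = t := by
  classical
  simp only [TF, Finset.mem_filter, Finset.mem_powerset]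
  constructor
  · rintro ⟨-, h⟩
    exact h
  · rintro ⟨a, ha, rfl⟩
    exact ⟨tpF_subset φ M w0, a, ha, rfl⟩

/-- Multiplicities. -/
noncomputable def μF (p : PathW M w0 φ.md) (t : Finset Fml) : ℕ :=
  (min ({a ∈ M.dom p.cur | tpF φ M w0 p a = t}.encard) ((φ.cpt : ℕ∞) + 1)).toNat

lemma μF_spec (p : PathW M w0 φ.md) (t : Finset Fml) :
    (μF φ M w0 p t : ℕ∞)
      = min ({a ∈ M.dom p.cur | tpF φ M w0 p a = t}.encard) ((φ.cpt : ℕ∞) + 1) := by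
  refine ENat.coe_toNat ?_
  have h1 : ((φ.cpt : ℕ∞) + 1) < ⊤ := by
    have : ((φ.cpt : ℕ∞) + 1) = ((φ.cpt + 1 : ℕ) : ℕ∞) := by push_cast; ring
    rw [this]
    exact ENat.coe_lt_top _
  exact ((min_le_right _ _).trans_lt h1).ne

lemma qsF (p : PathW M w0 φ.md) : IsQuasistate φ (TF φ M w0 p) (μF φ M w0 p) := by
  constructor
  · obtain ⟨a, ha⟩ := M.domNe p.cur
    exact ⟨tpF φ M w0 p a, mem_TF φ M w0 |>.mpr ⟨a, ha, rfl⟩⟩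
  · intro t ht
    obtain ⟨a, ha, rfl⟩ := (mem_TF φ M w0).mp ht
    refine ⟨tpF_subset φ M w0, ?_, ?_⟩
    · intro ψ hψ
      have hψs := Fml.neg_mem_sub hψ
      simp only [mem_tpF, KModel.sat, hψ, hψs, true_and]
    · intro ψ χ hψχ
      obtain ⟨hψ, hχ⟩ := Fml.conj_mem_sub hψχ
      simp only [mem_tpF, KModel.sat, hψχ, hψ, hχ, true_and]
  · intro t ht
    obtain ⟨a, ha, rfl⟩ := (mem_TF φ M w0).mp ht
    have h1 : (1 : ℕ∞) ≤ min ({b ∈ M.dom p.cur | tpF φ M w0 p b = tpF φ M w0 p a}.encard)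
        ((φ.cpt : ℕ∞) + 1) :=
      le_min (Set.one_le_encard_iff_nonempty.mpr ⟨a, ha, rfl⟩) le_add_self
    rw [← μF_spec] at h1
    exact_mod_cast h1
  · intro t ht
    have h1 := min_le_right ({a ∈ M.dom p.cur | tpF φ M w0 p a = t}.encard) ((φ.cpt : ℕ∞) + 1)
    rw [← μF_spec] at h1
    have h2 : ((φ.cpt : ℕ∞) + 1) = ((φ.cpt + 1 : ℕ) : ℕ∞) := by push_cast; ring
    rw [h2] at h1
    exact_mod_cast h1
  · intro t ht c ξ hsub
    obtain ⟨a, ha, rfl⟩ := (mem_TF φ M w0).mp ht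
    have hξ : ξ ∈ φ.sub := Fml.countLe_mem_sub hsub
    have hc : c ≤ φ.cpt := Fml.le_cpt_of_countLe_mem_sub hsub
    have hkey := key_count (C := φ.cpt) (M.dom p.cur) (tpF φ M w0 p) (TF φ M w0 p)
      (μF φ M w0 p) (fun b hb => (mem_TF φ M w0).mpr ⟨b, hb, rfl⟩)
      (fun t' _ => μF_spec φ M w0 p t') hc ξ
    have hset : {b ∈ M.dom p.cur | ξ ∈ tpF φ M w0 p b}
        = {b | b ∈ (trunc M w0 φ.md).dom p ∧ (trunc M w0 φ.md).sat ξ p b} := by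
      ext b
      simp only [Set.mem_setOf_eq, mem_tpF, hξ, true_and]
      exact Iff.rfl
    rw [hset] at hkey
    rw [← hkey]
    simp only [mem_tpF, hsub, true_and, KModel.sat]
    exact Iff.rfl

end Forward3

lemma forward {φ : Fml} (h : satQK φ) : Nonempty (Quasimodel φ) := by
  classical
  obtain ⟨M, hcd, w0, a0, ha0, hsat⟩ := h
  have hdom : ∀ p : PathW M w0 φ.md, M.dom p.cur = M.dom w0 := fun p => hcd _ _
  refine ⟨⟨PathW M w0 φ.md, {a : M.D // a ∈ M.dom w0}, pprec, rootP M w0 φ.md,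
    TF φ M w0, μF φ M w0, fun i p => tpF φ M w0 p i.val, ?_⟩⟩
  refine ⟨isTreeP, qsF φ M w0, ⟨⟨a0, ha0⟩⟩, ?_, ?_, ?_, ?_, ?_⟩
  · -- run
    intro i p
    exact (mem_TF φ M w0).mpr ⟨i.val, by rw [hdom]; exact i.prop, rfl⟩
  · -- witness
    refine ⟨rootP M w0 φ.md, tpF φ M w0 (rootP M w0 φ.md) a0,
      (mem_TF φ M w0).mpr ⟨a0, by rw [rootP_cur]; exact ha0, rfl⟩, ?_⟩
    refine (mem_tpF φ M w0).mpr ⟨Fml.mem_sub_self φ, ?_⟩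
    have hlen : (rootP M w0 φ.md).val.length + φ.md ≤ φ.md + 1 := by
      show 1 + φ.md ≤ φ.md + 1
      omega
    exact (trunc_sat φ (rootP M w0 φ.md) a0 hlen).mpr (by rw [rootP_cur]; exact hsat)
  · -- coherence
    intro i w v ξ hsub hwv hmem
    rw [mem_tpF] at hmem ⊢
    refine ⟨hsub, ?_⟩
    simp only [KModel.sat]
    exact ⟨v, hwv, hmem.2⟩
  · -- saturation
    intro i w ξ hsub hmem
    rw [mem_tpF] at hmem
    have h2 := hmem.2
    simp only [KModel.sat] at h2
    obtain ⟨q, hq, hsatq⟩ := h2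
    exact ⟨q, hq, (mem_tpF φ M w0).mpr ⟨Fml.dia_mem_sub hsub, hsatq⟩⟩
  · -- mult
    intro p t ht
    rw [μF_spec]
    have himg : Subtype.val '' {i : {a : M.D // a ∈ M.dom w0} | tpF φ M w0 p i.val = t}
        = {a ∈ M.dom p.cur | tpF φ M w0 p a = t} := by
      ext a
      simp only [Set.mem_image, Set.mem_setOf_eq, hdom p]
      constructor
      · rintro ⟨⟨b, hb⟩, hb2, rfl⟩
        exact ⟨hb, hb2⟩
      · rintro ⟨ha1, ha2⟩
        exact ⟨⟨a, ha1⟩, ha2, rfl⟩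
    rw [← himg, Set.InjOn.encard_image (Subtype.val_injective.injOn)]


/-- φ is satisfiable with respect to QK iff there exists a quasimodel for φ. -/
theorem stmt_0 (φ : Fml) : satQK φ ↔ Nonempty (Quasimodel φ) :=
  ⟨forward, backward⟩
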